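/- Let A₀ = e₃ ⊗ (e₁ + i e₂)ᵀ ∈ gl(3,ℂ) and let Orb(A₀) = {e^{iφ} R₁ A₀ R₂⁻¹ : φ ∈ ℝ, R₁, R₂ ∈ SO(3)}. Then the subgroup SO(3) × SO(3), acting by (R₁, R₂) · A = R₁ A R₂⁻¹, acts transitively on Orb(A₀) (i.e. every element of Orb(A₀) is of the form R₁ A₀ R₂⁻¹), and the stabilizer {(R₁, R₂) ∈ SO(3) × SO(3) : R₁ A₀ R₂⁻¹ = A₀} is isomorphic, as a group, to the orthogonal group O(2). -/

import Mathlib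

open Matrix

noncomputable section

abbrev M3R : Type := Matrix (Fin 3) (Fin 3) ℝ
abbrev M3C : Type := Matrix (Fin 3) (Fin 3) ℂ

def isSO3 (R : M3R) : Prop := R * Rᵀ = 1 ∧ R.det = 1

def toC (R : M3R) : M3C := R.map (fun x => (x : ℂ))

/-- `A₀ = e₃ ⊗ (e₁ + i e₂)ᵀ`. -/
def A0 : M3C := !![0, 0, 0; 0, 0, 0; 1, Complex.I, 0]

/-- The orbit of `A₀` under the `U(1) × SO(3) × SO(3)` action. -/
def OrbA0 : Set M3C :=
  {A | ∃ (φ : ℝ) (R₁ R₂ : M3R), isSO3 R₁ ∧ isSO3 R₂ ∧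
    A = Complex.exp (φ * Complex.I) • (toC R₁ * A0 * (toC R₂)⁻¹)}

/-- The stabilizer of `A₀` in `SO(3) × SO(3)` acting by `(R₁, R₂) · A = R₁ A R₂⁻¹`,
as a subtype (with componentwise multiplication inherited from `M3R × M3R`). -/
abbrev StabA0 : Type :=
  {p : M3R × M3R // (isSO3 p.1 ∧ isSO3 p.2) ∧ toC p.1 * A0 * (toC p.2)⁻¹ = A0}



lemma toC_eq (R : M3R) : toC R = R.map (Complex.ofRealHom : ℝ →+* ℂ) := rfl

lemma toC_mul (A B : M3R) : toC (A * B) = toC A * toC B := by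
  simp [toC_eq, Matrix.map_mul]

lemma toC_one : toC 1 = 1 := by
  simp [toC_eq]

lemma toC_transpose (A : M3R) : toC Aᵀ = (toC A)ᵀ := rfl

lemma inv_toC (R : M3R) (h : isSO3 R) : (toC R)⁻¹ = toC Rᵀ := by
  apply Matrix.inv_eq_right_inv
  rw [← toC_mul, h.1, toC_one]

lemma isSO3_mul (A B : M3R) (hA : isSO3 A) (hB : isSO3 B) : isSO3 (A * B) := by
  constructor
  · rw [Matrix.transpose_mul, show A * B * (Bᵀ * Aᵀ) = A * (B * Bᵀ) * Aᵀ by noncomm_ring,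
      hB.1, mul_one, hA.1]
  · rw [Matrix.det_mul, hA.2, hB.2, one_mul]

def Rot (θ : ℝ) : M3R := !![Real.cos θ, -Real.sin θ, 0; Real.sin θ, Real.cos θ, 0; 0, 0, 1]

lemma Rot_transpose (θ : ℝ) :
    (Rot θ)ᵀ = !![Real.cos θ, Real.sin θ, 0; -Real.sin θ, Real.cos θ, 0; 0, 0, 1] := by
  ext i j; fin_cases i <;> fin_cases j <;> rfl

lemma isSO3_Rot (θ : ℝ) : isSO3 (Rot θ) := by
  constructor
  · rw [Rot_transpose]
    ext i j
    fin_cases i <;> fin_cases j <;>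
      simp [Rot, Matrix.mul_apply, Fin.sum_univ_three, Matrix.one_apply] <;>
      nlinarith [Real.sin_sq_add_cos_sq θ]
  · simp [Rot, Matrix.det_fin_three]
    nlinarith [Real.sin_sq_add_cos_sq θ]

lemma A0_rot (φ : ℝ) : Complex.exp (φ * Complex.I) • A0 = A0 * (toC (Rot (-φ)))⁻¹ := by
  rw [inv_toC _ (isSO3_Rot _), Rot_transpose]
  ext i j
  fin_cases i <;> fin_cases j <;>
    simp [A0, toC, Matrix.mul_apply, Fin.sum_univ_three, Complex.exp_mul_I,
      Complex.ext_iff, Real.cos_neg, Real.sin_neg, Matrix.vecHead, Matrix.vecTail]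
set_option maxHeartbeats 2000000 in
lemma stab_char (R₁ R₂ : M3R) (h₁ : isSO3 R₁) (h₂ : isSO3 R₂)
    (h : toC R₁ * A0 * (toC R₂)⁻¹ = A0) :
    R₁ 0 2 = 0 ∧ R₁ 1 2 = 0 ∧ R₁ 2 0 = 0 ∧ R₁ 2 1 = 0 ∧ R₁ 2 2 ^ 2 = 1 ∧
      (R₁ 0 0 * R₁ 1 1 - R₁ 0 1 * R₁ 1 0 = R₁ 2 2) ∧
      R₂ = !![R₁ 2 2, 0, 0; 0, R₁ 2 2, 0; 0, 0, 1] := by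
  rw [inv_toC _ h₂] at h
  have E : ∀ i j, (toC R₁ * A0 * toC R₂ᵀ) i j = A0 i j := fun i j => by rw [h]
  have e20 := E 2 0
  have e21 := E 2 1
  have e22 := E 2 2
  have e00 := E 0 0
  have e10 := E 1 0
  simp [toC, A0, Matrix.mul_apply, Fin.sum_univ_three, Complex.ext_iff, Matrix.vecHead, Matrix.vecTail] at e20 e21 e22 e00 e10
  -- orthogonality rows
  have O1 : ∀ i j, (R₁ * R₁ᵀ) i j = (1 : M3R) i j := fun i j => by rw [h₁.1]
  have O2 : ∀ i j, (R₂ * R₂ᵀ) i j = (1 : M3R) i j := fun i j => by rw [h₂.1]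
  have o1 := O1 2 2
  have p0 := O2 0 0
  have p1 := O2 1 1
  have p2 := O2 2 2
  simp [Matrix.mul_apply, Fin.sum_univ_three, Matrix.one_apply] at o1 p0 p1 p2
  set a := R₁ 2 2 with ha
  have hb1 : R₂ 0 0 ^ 2 ≤ 1 := by nlinarith [p0, sq_nonneg (R₂ 0 1), sq_nonneg (R₂ 0 2)]
  have ha1 : a ^ 2 ≤ 1 := by nlinarith [o1, sq_nonneg (R₁ 2 0), sq_nonneg (R₁ 2 1)]
  have hab : a ^ 2 * R₂ 0 0 ^ 2 = 1 := by nlinarith [e20.1]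
  have hsq : a ^ 2 = 1 := by
    nlinarith [hab, hb1, ha1, mul_nonneg (sq_nonneg a) (by linarith : (0:ℝ) ≤ 1 - R₂ 0 0 ^ 2)]
  have hane : a ≠ 0 := by intro h0; rw [h0] at hsq; norm_num at hsq
  have r00 : R₂ 0 0 = a := by linear_combination a * e20.1 - R₂ 0 0 * hsq
  have r01 : R₂ 0 1 = 0 := e20.2.resolve_left hane
  have r10 : R₂ 1 0 = 0 := e21.1.resolve_left hane
  have r11 : R₂ 1 1 = a := by linear_combination a * e21.2 - R₂ 1 1 * hsq
  have r20 : R₂ 2 0 = 0 := e22.1.resolve_left hane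
  have r21 : R₂ 2 1 = 0 := e22.2.resolve_left hane
  have hR00ne : R₂ 0 0 ≠ 0 := by rw [r00]; exact hane
  have q02 : R₁ 0 2 = 0 := e00.1.resolve_right hR00ne
  have q12 : R₁ 1 2 = 0 := e10.1.resolve_right hR00ne
  have r02 : R₂ 0 2 = 0 := by
    have : R₂ 0 2 ^ 2 = 0 := by nlinarith [p0, hsq, r00, r01]
    exact pow_eq_zero_iff (by norm_num) |>.1 this
  have r12 : R₂ 1 2 = 0 := by
    have : R₂ 1 2 ^ 2 = 0 := by nlinarith [p1, hsq, r10, r11]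
    exact pow_eq_zero_iff (by norm_num) |>.1 this
  have d2 := h₂.2
  rw [Matrix.det_fin_three, r00, r01, r10, r11, r20, r21] at d2
  have r22 : R₂ 2 2 = 1 := by linear_combination d2 - R₂ 2 2 * hsq
  have q20 : R₁ 2 0 = 0 := by
    have : R₁ 2 0 ^ 2 = 0 := by nlinarith [o1, hsq, sq_nonneg (R₁ 2 1)]
    exact pow_eq_zero_iff (by norm_num) |>.1 this
  have q21 : R₁ 2 1 = 0 := by
    have : R₁ 2 1 ^ 2 = 0 := by nlinarith [o1, hsq, sq_nonneg (R₁ 2 0)]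
    exact pow_eq_zero_iff (by norm_num) |>.1 this
  have d1 := h₁.2
  rw [Matrix.det_fin_three, q02, q12, q20, q21] at d1
  have detB : R₁ 0 0 * R₁ 1 1 - R₁ 0 1 * R₁ 1 0 = a := by
    linear_combination a * d1 - (R₁ 0 0 * R₁ 1 1 - R₁ 0 1 * R₁ 1 0) * hsq
  refine ⟨q02, q12, q20, q21, hsq, detB, ?_⟩
  ext i j
  fin_cases i <;> fin_cases j <;>
    simp [r00, r01, r02, r10, r11, r12, r20, r21, r22, Matrix.vecHead, Matrix.vecTail]

def emb (B : Matrix (Fin 2) (Fin 2) ℝ) : M3R :=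
  !![B 0 0, B 0 1, 0; B 1 0, B 1 1, 0; 0, 0, B.det]

def Dg (d : ℝ) : M3R := !![d, 0, 0; 0, d, 0; 0, 0, 1]

lemma star_eq_T (A : Matrix (Fin 2) (Fin 2) ℝ) : star A = Aᵀ := by
  rw [Matrix.star_eq_conjTranspose, Matrix.conjTranspose_eq_transpose_of_trivial]

lemma emb_transpose (B : Matrix (Fin 2) (Fin 2) ℝ) :
    (emb B)ᵀ = !![B 0 0, B 1 0, 0; B 0 1, B 1 1, 0; 0, 0, B.det] := by
  ext i j; fin_cases i <;> fin_cases j <;> rfl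

lemma Dg_transpose (d : ℝ) : (Dg d)ᵀ = Dg d := by
  ext i j; fin_cases i <;> fin_cases j <;> rfl

lemma det_sq (B : Matrix (Fin 2) (Fin 2) ℝ) (hB : B * Bᵀ = 1) : B.det ^ 2 = 1 := by
  have := congrArg Matrix.det hB
  rw [Matrix.det_mul, Matrix.det_transpose, Matrix.det_one] at this
  nlinarith [this]

lemma isSO3_emb (B : Matrix (Fin 2) (Fin 2) ℝ) (hB : B * Bᵀ = 1) : isSO3 (emb B) := by
  have q := fun i j => congrFun (congrFun hB i) j
  have q00 := q 0 0; have q01 := q 0 1; have q10 := q 1 0; have q11 := q 1 1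
  simp [Matrix.mul_apply, Fin.sum_univ_two, Matrix.one_apply] at q00 q01 q10 q11
  have hd := det_sq B hB
  constructor
  · rw [emb_transpose]
    ext i j
    fin_cases i <;> fin_cases j <;>
      simp [emb, Matrix.mul_apply, Fin.sum_univ_three, Matrix.one_apply,
        Matrix.vecHead, Matrix.vecTail] <;>
      nlinarith [q00, q01, q10, q11, hd]
  · have h1 : (emb B).det = B.det * B.det := by
      simp [emb, Matrix.det_fin_three, Matrix.det_fin_two]; ring
    rw [h1]; nlinarith [hd]

lemma isSO3_Dg (d : ℝ) (hd : d ^ 2 = 1) : isSO3 (Dg d) := by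
  constructor
  · rw [Dg_transpose]
    ext i j
    fin_cases i <;> fin_cases j <;>
      simp [Dg, Matrix.mul_apply, Fin.sum_univ_three, Matrix.one_apply,
        Matrix.vecHead, Matrix.vecTail] <;>
      nlinarith [hd]
  · simp [Dg, Matrix.det_fin_three]
    nlinarith [hd]

lemma stab_eq (B : Matrix (Fin 2) (Fin 2) ℝ) (hB : B * Bᵀ = 1) :
    toC (emb B) * A0 * (toC (Dg B.det))⁻¹ = A0 := by
  have hd := det_sq B hB
  rw [inv_toC _ (isSO3_Dg _ hd), Dg_transpose]
  ext i j
  fin_cases i <;> fin_cases j <;>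
    simp [toC, A0, emb, Dg, Matrix.mul_apply, Fin.sum_univ_three, Complex.ext_iff,
      Matrix.vecHead, Matrix.vecTail] <;>
    nlinarith [hd]

/-- `SO(3) × SO(3)` acts transitively on `Orb(A₀)`, and the stabilizer of `A₀` is
isomorphic, as a group, to the orthogonal group `O(2)`. -/
theorem SO3xSO3_transitive_and_stabilizer_iso_O2 :
    (∀ A ∈ OrbA0, ∃ R₁ R₂ : M3R, isSO3 R₁ ∧ isSO3 R₂ ∧
        A = toC R₁ * A0 * (toC R₂)⁻¹) ∧
    ∃ f : StabA0 → Matrix.orthogonalGroup (Fin 2) ℝ,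
      Function.Bijective f ∧
        ∀ a b c : StabA0, c.val = a.val * b.val → f c = f a * f b := by
  constructor
  · rintro A ⟨φ, R₁, R₂, h1, h2, rfl⟩
    refine ⟨R₁, R₂ * Rot (-φ), h1, isSO3_mul _ _ h2 (isSO3_Rot _), ?_⟩
    rw [toC_mul, Matrix.mul_inv_rev,
      show toC R₁ * A0 * ((toC (Rot (-φ)))⁻¹ * (toC R₂)⁻¹)
          = toC R₁ * (A0 * (toC (Rot (-φ)))⁻¹) * (toC R₂)⁻¹ from by noncomm_ring,
      ← A0_rot, mul_smul_comm, smul_mul_assoc]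
  · -- the map extracting the upper-left 2×2 block
    have hmem : ∀ p : StabA0,
        !![p.1.1 0 0, p.1.1 0 1; p.1.1 1 0, p.1.1 1 1] ∈ Matrix.orthogonalGroup (Fin 2) ℝ := by
      intro p
      obtain ⟨hq02, hq12, _, _, _, _, _⟩ :=
        stab_char p.1.1 p.1.2 p.2.1.1 p.2.1.2 p.2.2
      rw [Matrix.mem_orthogonalGroup_iff]
      have q := fun i j => congrFun (congrFun p.2.1.1.1 i) j
      have q00 := q 0 0; have q01 := q 0 1; have q10 := q 1 0; have q11 := q 1 1
      simp [Matrix.mul_apply, Fin.sum_univ_three, Matrix.one_apply] at q00 q01 q10 q11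
      rw [hq02] at q00 q01
      rw [hq12] at q10 q11
      ext i j
      fin_cases i <;> fin_cases j <;>
        simp [Matrix.mul_apply, Fin.sum_univ_two, Matrix.one_apply,
          Matrix.vecHead, Matrix.vecTail] <;>
        linarith [q00, q01, q10, q11]
    refine ⟨fun p => ⟨!![p.1.1 0 0, p.1.1 0 1; p.1.1 1 0, p.1.1 1 1], hmem p⟩, ⟨?_, ?_⟩, ?_⟩
    · -- injective
      intro p q hpq
      have hBeq : ∀ i j : Fin 2,
          (!![p.1.1 0 0, p.1.1 0 1; p.1.1 1 0, p.1.1 1 1] : Matrix (Fin 2) (Fin 2) ℝ) i j =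
          !![q.1.1 0 0, q.1.1 0 1; q.1.1 1 0, q.1.1 1 1] i j := by
        intro i j
        exact congrFun (congrFun (congrArg Subtype.val hpq) i) j
      have b00 := hBeq 0 0; have b01 := hBeq 0 1; have b10 := hBeq 1 0; have b11 := hBeq 1 1
      simp [Matrix.vecHead, Matrix.vecTail] at b00 b01 b10 b11
      obtain ⟨p02, p12, p20, p21, _, pdet, pR2⟩ :=
        stab_char p.1.1 p.1.2 p.2.1.1 p.2.1.2 p.2.2
      obtain ⟨s02, s12, s20, s21, _, sdet, sR2⟩ :=
        stab_char q.1.1 q.1.2 q.2.1.1 q.2.1.2 q.2.2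
      have h22 : p.1.1 2 2 = q.1.1 2 2 := by
        rw [← pdet, ← sdet, b00, b01, b10, b11]
      have hfst : p.1.1 = q.1.1 := by
        ext i j
        fin_cases i <;> fin_cases j <;>
          simp [Matrix.vecHead, Matrix.vecTail, b00, b01, b10, b11, p02, p12, p20, p21,
            s02, s12, s20, s21, h22]
      have hsnd : p.1.2 = q.1.2 := by rw [pR2, sR2, h22]
      exact Subtype.ext (Prod.ext hfst hsnd)
    · -- surjective
      intro B
      have hB : B.1 * B.1ᵀ = 1 := by
        have := B.2
        rwa [Matrix.mem_orthogonalGroup_iff] at this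
      refine ⟨⟨(emb B.1, Dg B.1.det),
        ⟨⟨isSO3_emb B.1 hB, isSO3_Dg _ (det_sq B.1 hB)⟩, stab_eq B.1 hB⟩⟩, ?_⟩
      apply Subtype.ext
      ext i j
      fin_cases i <;> fin_cases j <;> rfl
    · -- multiplicativity
      intro a b c hc
      have hfst : c.1.1 = a.1.1 * b.1.1 := congrArg Prod.fst hc
      obtain ⟨_, _, b20, b21, _, _, _⟩ :=
        stab_char b.1.1 b.1.2 b.2.1.1 b.2.1.2 b.2.2
      apply Subtype.ext
      have hc' := fun i j => congrFun (congrFun hfst i) j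
      have c00 := hc' 0 0; have c01 := hc' 0 1; have c10 := hc' 1 0; have c11 := hc' 1 1
      simp [Matrix.mul_apply, Fin.sum_univ_three] at c00 c01 c10 c11
      rw [b20] at c00 c10
      rw [b21] at c01 c11
      ext i j
      fin_cases i <;> fin_cases j <;>
        simp [Matrix.mul_apply, Fin.sum_univ_two, Matrix.vecHead, Matrix.vecTail] <;>
        linarith [c00, c01, c10, c11]
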